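/- Let G be a k-regular graph on n vertices with n and k both even and k ≥ 3. If G admits a 2-coloring under which strictly more than half of the vertices are under strict majority illusion, then n ≥ 2(3k+2)/(k−2). -/
import Mathlib


open Finset

variable {V : Type*} [Fintype V] [DecidableEq V]

/-- The strict majority color of a finite set of agents (`true` = red, `false` = blue),
or `none` in case of a tie. -/
def maj (c : V → Bool) (s : Finset V) : Option Bool :=
  if 2 * (s.filter fun v => c v = true).card > s.card then some true
  else if 2 * (s.filter fun v => c v = false).card > s.card then some false
  else none

/-- Vertex `i` is under weak-majority illusion: the majority winner (possibly a tie)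
of its neighborhood differs from the global one. -/
def weakIll (G : SimpleGraph V) [DecidableRel G.Adj] (c : V → Bool) (i : V) : Prop :=
  maj c (G.neighborFinset i) ≠ maj c Finset.univ

/-- Vertex `i` is under strict majority illusion: neither its neighborhood nor the whole
graph is tied, and their majority winners differ. -/
def strictIll (G : SimpleGraph V) [DecidableRel G.Adj] (c : V → Bool) (i : V) : Prop :=
  maj c (G.neighborFinset i) ≠ none ∧ maj c Finset.univ ≠ none ∧
    maj c (G.neighborFinset i) ≠ maj c Finset.univ

instance (G : SimpleGraph V) [DecidableRel G.Adj] (c : V → Bool) :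
    DecidablePred (weakIll G c) := fun _ => by unfold weakIll; infer_instance

instance (G : SimpleGraph V) [DecidableRel G.Adj] (c : V → Bool) :
    DecidablePred (strictIll G c) := fun _ => by unfold strictIll; infer_instance

lemma maj_spec {c : V → Bool} {s : Finset V} {b : Bool}
    (h : maj c s = some b) : 2 * (s.filter fun v => c v = b).card > s.card := by
  unfold maj at h
  split_ifs at h with h1 h2
  · simp only [Option.some.injEq] at h; subst h; exact h1
  · simp only [Option.some.injEq] at h; subst h; exact h2

lemma maj_exists {c : V → Bool} {s : Finset V} (h : maj c s ≠ none) :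
    ∃ b, maj c s = some b := by
  cases hm : maj c s with
  | none => exact absurd hm h
  | some b => exact ⟨b, rfl⟩

lemma double_count (G : SimpleGraph V) [DecidableRel G.Adj] (c : V → Bool) (b : Bool) :
    ∑ v : V, ((G.neighborFinset v).filter fun u => c u = b).card
      = ∑ u ∈ univ.filter (fun u => c u = b), G.degree u := by
  have key : ∀ v : V, ((G.neighborFinset v).filter fun u => c u = b).card
      = ∑ u : V, if G.Adj v u ∧ c u = b then 1 else 0 := by
    intro v
    rw [Finset.card_filter]
    rw [← Finset.sum_filter_add_sum_filter_not univ (fun u => G.Adj v u)]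
    have hz : ∑ u ∈ univ.filter (fun u => ¬ G.Adj v u),
        (if G.Adj v u ∧ c u = b then (1:ℕ) else 0) = 0 := by
      apply Finset.sum_eq_zero
      intro u hu
      simp only [mem_filter] at hu
      simp [hu.2]
    rw [hz, add_zero, ← SimpleGraph.neighborFinset_eq_filter]
    apply Finset.sum_congr rfl
    intro u hu
    rw [SimpleGraph.mem_neighborFinset] at hu
    simp [hu]
  simp only [key]
  rw [Finset.sum_comm, Finset.sum_filter]
  apply Finset.sum_congr rfl
  intro u _
  by_cases hb : c u = b
  · simp only [hb, and_true, if_pos]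
    rw [← SimpleGraph.card_neighborFinset_eq_degree,
      SimpleGraph.neighborFinset_eq_filter, Finset.card_filter]
    apply Finset.sum_congr rfl
    intro v _
    simp only [G.adj_comm u v]
  · simp [hb]

theorem regular_even_even_majority_majority_bound (G : SimpleGraph V) [DecidableRel G.Adj]
    (k : ℕ) (hreg : ∀ v : V, G.degree v = k)
    (hn : Even (Fintype.card V)) (hk : Even k) (hk3 : 3 ≤ k)
    (h : ∃ c : V → Bool,
      2 * (Finset.univ.filter fun i => strictIll G c i).card > Fintype.card V) :
    (Fintype.card V : ℚ) ≥ 2 * (3 * k + 2) / (k - 2) := by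
  obtain ⟨c, hc⟩ := h
  set n := Fintype.card V with hn_def
  set I := univ.filter (fun i => strictIll G c i) with hI
  -- I is nonempty, so some vertex is under strict illusion; global majority exists
  have hInonempty : I.Nonempty := by
    rw [← Finset.card_pos]; omega
  obtain ⟨i0, hi0⟩ := hInonempty
  rw [hI, mem_filter] at hi0
  obtain ⟨t, ht⟩ := maj_exists hi0.2.2.1
  -- counts
  set B := univ.filter (fun u => c u = !t) with hB
  set T := univ.filter (fun u => c u = t) with hT
  have hTB : T.card + B.card = n := by
    rw [hT, hB]
    have : (univ.filter (fun u => c u = !t)) = univ.filter (fun u => ¬ (c u = t)) := by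
      apply Finset.filter_congr
      intro u _
      cases hcu : c u <;> cases t <;> simp
    rw [this, Finset.card_filter_add_card_filter_not, Finset.card_univ]
  -- global majority count
  have hTbig : 2 * T.card > n := maj_spec ht
  have hkmod : k % 2 = 0 := Nat.even_iff.mp hk
  have hnmod : n % 2 = 0 := Nat.even_iff.mp hn
  have hBsmall : 2 * B.card + 2 ≤ n := by omega
  -- each illusioned vertex sees ≥ k/2 + 1 minority-colored neighbors
  have hIll : ∀ v ∈ I, k + 2 ≤ 2 * ((G.neighborFinset v).filter fun u => c u = !t).card := by
    intro v hv
    rw [hI, mem_filter] at hv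
    obtain ⟨s, hs⟩ := maj_exists hv.2.1
    have hst : s = !t := by
      have := hv.2.2.2
      rw [hs, ht] at this
      cases s <;> cases t <;> simp_all
    rw [hst] at hs
    have := maj_spec hs
    rw [SimpleGraph.card_neighborFinset_eq_degree, hreg v] at this
    omega
  -- double count
  set f : V → ℕ := fun v => ((G.neighborFinset v).filter fun u => c u = !t).card with hf
  have hsum : ∑ v : V, f v = k * B.card := by
    rw [hf]
    rw [double_count G c (!t)]
    rw [← hB]
    rw [Finset.sum_congr rfl (fun u _ => hreg u), Finset.sum_const, smul_eq_mul, mul_comm]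
  have hlow : I.card * (k + 2) ≤ 2 * ∑ v : V, f v := by
    calc I.card * (k + 2) = ∑ _v ∈ I, (k + 2) := by rw [Finset.sum_const, smul_eq_mul]
    _ ≤ ∑ v ∈ I, 2 * f v := Finset.sum_le_sum hIll
    _ ≤ ∑ v : V, 2 * f v := Finset.sum_le_sum_of_subset (Finset.subset_univ I)
    _ = 2 * ∑ v : V, f v := by rw [Finset.mul_sum]
  rw [hsum] at hlow
  -- combine: (n+2)(k+2) + 4k ≤ 2kn
  have hc2 : n + 2 ≤ 2 * I.card := by omega
  have h1 : (n + 2) * (k + 2) ≤ (2 * I.card) * (k + 2) := Nat.mul_le_mul_right _ hc2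
  have h4 : 2 * k * (2 * B.card + 2) ≤ 2 * k * n := Nat.mul_le_mul_left _ hBsmall
  have hmain : 2 * n + 6 * k + 4 ≤ k * n := by nlinarith [h1, h4, hlow]
  -- conclude over ℚ
  have hk2 : (0:ℚ) < (k:ℚ) - 2 := by
    have : (3:ℚ) ≤ (k:ℚ) := by exact_mod_cast hk3
    linarith
  rw [ge_iff_le, div_le_iff₀ hk2]
  have : (2 * n + 6 * k + 4 : ℚ) ≤ (k:ℚ) * n := by exact_mod_cast hmain
  nlinarith
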